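/- Let k be a field of characteristic not two and s a three-dimensional simple Lie algebra over k with Killing form K. Then for all v, w ∈ s: K([v,w],[v,w]) = (1/2)(K(v,w)² − K(v,v)·K(w,w)). -/

import Mathlib

open Finset

attribute [local instance 100] LieRing.ofAssociativeRing

/-- For a three-dimensional simple Lie algebra `s` over `k` (char ≠ 2) with Killing form `K`,
`K([v,w],[v,w]) = (1/2)·(K(v,w)² − K(v,v)·K(w,w))` for all `v, w ∈ s`. -/
theorem killing_form_of_bracket (k : Type*) [Field k] (hchar : (2 : k) ≠ 0)
    (L : Type*) [LieRing L] [LieAlgebra k L] [Module.Finite k L]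
    (hdim : Module.finrank k L = 3) [LieAlgebra.IsSimple k L] (v w : L) :
    killingForm k L ⁅v, w⁆ ⁅v, w⁆ =
      (killingForm k L v w ^ 2 - killingForm k L v v * killingForm k L w w) / 2 := by
  classical
  obtain ⟨b⟩ : Nonempty (Module.Basis (Fin 3) k L) :=
    ⟨(Module.finBasis k L).reindex (finCongr hdim)⟩
  -- trace as sum of diagonal coefficients
  have htrace : ∀ f : L →ₗ[k] L, LinearMap.trace k L f = ∑ i, b.repr (f (b i)) i := by
    intro f
    rw [LinearMap.trace_eq_matrix_trace k b f, Matrix.trace]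
    simp [Matrix.diag, LinearMap.toMatrix_apply]
  -- L is perfect
  have hperf : (⁅(⊤ : LieIdeal k L), (⊤ : LieIdeal k L)⁆ : LieIdeal k L) = ⊤ := by
    rcases LieAlgebra.IsSimple.eq_bot_or_eq_top
      (⁅(⊤ : LieIdeal k L), (⊤ : LieIdeal k L)⁆ : LieIdeal k L) with h | h
    · exfalso
      apply LieAlgebra.IsSimple.non_abelian k (L := L)
      rw [← lie_abelian_iff_equiv_lie_abelian (LieIdeal.topEquiv (R := k) (L := L))]
      exact (LieSubmodule.lie_abelian_iff_lie_self_eq_bot _).mpr h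
    · exact h
  -- unimodularity: trace of ad is zero
  have htr : ∀ x : L, LinearMap.trace k L (LieAlgebra.ad k L x) = 0 := by
    intro x
    have hx : x ∈ (⁅(⊤ : LieIdeal k L), (⊤ : LieIdeal k L)⁆ : LieIdeal k L) := by
      rw [hperf]; exact LieSubmodule.mem_top x
    rw [← LieSubmodule.mem_toSubmodule, LieSubmodule.lieIdeal_oper_eq_linear_span] at hx
    induction hx using Submodule.span_induction with
    | mem z hz =>
      obtain ⟨a, c, rfl⟩ := hz
      rw [LieHom.map_lie]
      exact LinearMap.trace_lie _ _
    | zero => simp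
    | add y z _ _ hy hz => rw [map_add, map_add, hy, hz, add_zero]
    | smul t y _ hy => rw [map_smul, map_smul, hy, smul_zero]
  -- structure constants
  set c : Fin 3 → Fin 3 → Fin 3 → k := fun i j l => b.repr ⁅b i, b j⁆ l with hc
  have hc' : ∀ i j l, c i j l = b.repr ⁅b i, b j⁆ l := fun i j l => by rw [hc]
  have lsum : ∀ (x : L) (f : Fin 3 → L), ⁅x, ∑ i, f i⁆ = ∑ i, ⁅x, f i⁆ := by
    intro x f
    exact map_sum (LieAlgebra.ad k L x) f univ
  have slie : ∀ (f : Fin 3 → L) (m : L), ⁅∑ i, f i, m⁆ = ∑ i, ⁅f i, m⁆ := by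
    intro f m
    calc (⁅∑ i, f i, m⁆ : L) = -⁅m, ∑ i, f i⁆ := (lie_skew _ _).symm
      _ = -∑ i, ⁅m, f i⁆ := by rw [lsum]
      _ = ∑ i, -⁅m, f i⁆ := by rw [Finset.sum_neg_distrib]
      _ = ∑ i, ⁅f i, m⁆ := Finset.sum_congr rfl fun i _ => lie_skew _ _
  have hself : ∀ i l, c i i l = 0 := by
    intro i l; rw [hc' i i l]; simp
  have hanti : ∀ i j l, c j i l = - c i j l := by
    intro i j l
    rw [hc' j i l, hc' i j l]
    have h : (⁅b j, b i⁆ : L) = -⁅b i, b j⁆ := by rw [← lie_skew]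
    rw [h, map_neg]
    simp
  have h10 : ∀ l, c 1 0 l = - c 0 1 l := hanti 0 1
  have h20 : ∀ l, c 2 0 l = - c 0 2 l := hanti 0 2
  have h21 : ∀ l, c 2 1 l = - c 1 2 l := hanti 1 2
  -- Killing form on basis vectors via structure constants
  have hκ : ∀ i j, killingForm k L (b i) (b j) = ∑ n, ∑ r, c j n r * c i r n := by
    intro i j
    rw [killingForm_apply_apply, htrace]
    refine Finset.sum_congr rfl fun n _ => ?_
    have hb : ((LieAlgebra.ad k L (b i) ∘ₗ LieAlgebra.ad k L (b j)) (b n) : L)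
        = ∑ r, c j n r • ⁅b i, b r⁆ := by
      rw [LinearMap.comp_apply, LieAlgebra.ad_apply, LieAlgebra.ad_apply]
      conv_lhs => rw [← b.sum_repr ⁅b j, b n⁆]
      rw [lsum]
      exact Finset.sum_congr rfl fun r _ => by rw [lie_smul, hc' j n r]
    rw [hb, map_sum, Finsupp.coe_finset_sum, Finset.sum_apply]
    exact Finset.sum_congr rfl fun r _ => by
      rw [map_smul, Finsupp.coe_smul, Pi.smul_apply, smul_eq_mul, hc' i r n]
  -- coordinates of the bracket
  have hrep : ∀ (x y : L) (l : Fin 3),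
      b.repr ⁅x, y⁆ l = ∑ i, ∑ j, b.repr x i * b.repr y j * c i j l := by
    intro x y l
    conv_lhs => rw [← b.sum_repr x, ← b.sum_repr y]
    rw [slie]
    simp only [lsum, lie_smul, smul_lie, map_sum, Finsupp.coe_finset_sum, Finset.sum_apply]
    refine Finset.sum_congr rfl fun i _ => ?_
    refine Finset.sum_congr rfl fun j _ => ?_
    rw [smul_smul, map_smul, Finsupp.coe_smul, Pi.smul_apply, smul_eq_mul, hc' i j l]
    ring
  -- Killing form in coordinates
  have hKbil : ∀ x y : L, killingForm k L x y =
      ∑ i, ∑ j, b.repr x i * b.repr y j * killingForm k L (b i) (b j) := by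
    intro x y
    conv_lhs => rw [← b.sum_repr x]
    rw [map_sum, LinearMap.sum_apply]
    refine Finset.sum_congr rfl fun i _ => ?_
    rw [LinearMap.BilinForm.smul_left]
    conv_lhs => rw [← b.sum_repr y]
    rw [map_sum, Finset.mul_sum]
    refine Finset.sum_congr rfl fun j _ => ?_
    rw [LinearMap.BilinForm.smul_right]
    ring
  -- unimodularity in coordinates
  have huni : ∀ i, ∑ n, c i n n = (0 : k) := by
    intro i
    have h := htr (b i)
    rw [htrace] at h
    rw [← h]
    exact Finset.sum_congr rfl fun n _ => by rw [hc' i n n, LieAlgebra.ad_apply]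
  have h0 := huni 0
  have h1 := huni 1
  have h2 := huni 2
  rw [Fin.sum_univ_three] at h0 h1 h2
  have e1 : c 0 2 2 = - c 0 1 1 := by linear_combination h0 - hself 0 0
  have e2 : c 1 2 2 = c 0 1 0 := by linear_combination h1 - h10 0 - hself 1 1
  have e3 : c 1 2 1 = - c 0 2 0 := by linear_combination - h2 + h20 0 + h21 1 + hself 2 2
  rw [eq_div_iff hchar]
  rw [hKbil ⁅v, w⁆ ⁅v, w⁆, hKbil v w, hKbil v v, hKbil w w]
  simp only [hκ, hrep]
  simp only [Fin.sum_univ_three]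
  simp only [hself, h10, h20, h21]
  rw [e1, e2, e3]
  ring
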